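/- Let ℓ = (ℓ_j)_{j≥1} be a bounded fractal string, let J ≥ 2 and let r_1, …, r_J ∈ (0,1) satisfy ∑_{j=1}^J r_j < 1, and let D ∈ (0,1) be the unique real number with ∑_{j=1}^J r_j^D = 1. Consider the extended self-similar fractal string obtained from ℓ and the ratio list {r_1,…,r_J}, indexed by pairs (w, j) where w ranges over all finite words in {1,…,J} and j ∈ ℕ, with lengths (∏_{i ∈ w} r_i)·ℓ_j. Then: (1) its total length is (∑_{j≥1} ℓ_j)/(1 − ∑_{j=1}^J r_j); (2) for every s ∈ ℂ with Re s > max{D(ζ_ℓ), D}, the sum ∑_{(w,j)} ((∏_{i∈w} r_i) ℓ_j)^s converges absolutely and equals ζ_ℓ(s)/(1 − ∑_{j=1}^J r_j^s); (3) the abscissa of convergence inf{α > 0 : ∑_{(w,j)} ((∏_{i∈w} r_i) ℓ_j)^α < ∞} equals max{D(ζ_ℓ), D}. -/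

import Mathlib

open Filter Set
open scoped Topology BigOperators


private lemma tuple_sum {R : Type*} [CommSemiring R] {J : ℕ} (f : Fin J → R) (n : ℕ) :
    ∑ v : Fin n → Fin J, ∏ i, f (v i) = (∑ j, f j) ^ n := by
  rw [Finset.sum_pow', Fintype.piFinset_univ]

private lemma sigma_comp {R : Type*} [CommMonoid R] {J : ℕ} (f : Fin J → R)
    (σ : Σ n, Fin n → Fin J) :
    ((List.equivSigmaTuple.symm σ).map f).prod = ∏ i, f (σ.2 i) := by
  obtain ⟨n, v⟩ := σ
  simp [List.equivSigmaTuple, List.map_ofFn, List.prod_ofFn]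

/-- Summability of norms and value of the sum over all words. -/
private lemma words_key {𝕜 : Type*} [NormedField 𝕜] [CompleteSpace 𝕜] {J : ℕ}
    (f : Fin J → 𝕜) (h : ∑ j, ‖f j‖ < 1) :
    Summable (fun w : List (Fin J) => ‖(w.map f).prod‖) ∧
    ∑' w : List (Fin J), (w.map f).prod = (1 - ∑ j, f j)⁻¹ := by
  have h0 : (0:ℝ) ≤ ∑ j, ‖f j‖ := Finset.sum_nonneg fun j _ => norm_nonneg _
  have hnorm : Summable (fun σ : Σ n, Fin n → Fin J => ∏ i, ‖f (σ.2 i)‖) := by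
    rw [summable_sigma_of_nonneg (fun σ => Finset.prod_nonneg fun i _ => norm_nonneg _)]
    refine ⟨fun n => .of_finite, ?_⟩
    have : ∀ n : ℕ, ∑' v : Fin n → Fin J, ∏ i, ‖f (v i)‖ = (∑ j, ‖f j‖) ^ n := by
      intro n; rw [tsum_fintype]; exact tuple_sum (fun j => ‖f j‖) n
    simp_rw [this]
    exact summable_geometric_of_lt_one h0 h
  have hsn : Summable (fun w : List (Fin J) => ‖(w.map f).prod‖) := by
    rw [← (List.equivSigmaTuple (α := Fin J)).symm.summable_iff]
    refine hnorm.congr fun σ => ?_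
    rw [Function.comp_apply, sigma_comp, norm_prod]
  refine ⟨hsn, ?_⟩
  have hs : Summable (fun w : List (Fin J) => (w.map f).prod) := hsn.of_norm
  have hss : Summable (fun σ : Σ n, Fin n → Fin J => ∏ i, f (σ.2 i)) := by
    rw [← (List.equivSigmaTuple (α := Fin J)).symm.summable_iff] at hs
    exact hs.congr fun σ => (sigma_comp f σ)
  calc ∑' w : List (Fin J), (w.map f).prod
      = ∑' σ : Σ n, Fin n → Fin J, ∏ i, f (σ.2 i) := by
        rw [← (List.equivSigmaTuple (α := Fin J)).symm.tsum_eq]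
        exact tsum_congr fun σ => sigma_comp f σ
    _ = ∑' n : ℕ, ∑' v : Fin n → Fin J, ∏ i, f (v i) := hss.tsum_sigma
    _ = ∑' n : ℕ, (∑ j, f j) ^ n := by
        refine tsum_congr fun n => ?_; rw [tsum_fintype]; exact tuple_sum f n
    _ = (1 - ∑ j, f j)⁻¹ := tsum_geometric_of_norm_lt_one
        (lt_of_le_of_lt (norm_sum_le _ _) h)

/-- Summability criterion for the word sums over nonnegative reals. -/
private lemma words_summable_iff {J : ℕ} (c : Fin J → ℝ) (hc : ∀ j, 0 ≤ c j) :
    Summable (fun w : List (Fin J) => (w.map c).prod) ↔ ∑ j, c j < 1 := by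
  have h0 : (0:ℝ) ≤ ∑ j, c j := Finset.sum_nonneg fun j _ => hc j
  constructor
  · intro hs
    have hss : Summable (fun σ : Σ n, Fin n → Fin J => ∏ i, c (σ.2 i)) := by
      rw [← (List.equivSigmaTuple (α := Fin J)).symm.summable_iff] at hs
      exact hs.congr fun σ => (sigma_comp c σ)
    rw [summable_sigma_of_nonneg (fun σ => Finset.prod_nonneg fun i _ => hc _)] at hss
    have := hss.2
    have heq : ∀ n : ℕ, ∑' v : Fin n → Fin J, ∏ i, c (v i) = (∑ j, c j) ^ n := by
      intro n; rw [tsum_fintype]; exact tuple_sum c n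
    simp_rw [heq] at this
    have := summable_geometric_iff_norm_lt_one.mp this
    rwa [Real.norm_eq_abs, abs_of_nonneg h0] at this
  · intro h
    have := (words_key c (by simpa [Real.norm_eq_abs, abs_of_nonneg (hc _)]
      using h)).1
    refine this.congr fun w => ?_
    rw [Real.norm_eq_abs, abs_of_nonneg]
    exact List.prod_nonneg (by simpa using fun i _ => hc i)

private lemma map_prod_pos {J : ℕ} {r : Fin J → ℝ} (hr : ∀ j, 0 < r j) (w : List (Fin J)) :
    0 < (w.map r).prod := by
  induction w with
  | nil => simp
  | cons a t ih => simp only [List.map_cons, List.prod_cons]; exact mul_pos (hr a) ih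

private lemma prod_map_rpow {J : ℕ} {r : Fin J → ℝ} (hr : ∀ j, 0 < r j) (α : ℝ)
    (w : List (Fin J)) :
    (w.map r).prod ^ α = (w.map fun i => r i ^ α).prod := by
  induction w with
  | nil => simp
  | cons a t ih =>
    simp only [List.map_cons, List.prod_cons]
    rw [Real.mul_rpow (hr a).le (map_prod_pos hr t).le, ih]

private lemma prod_map_cpow {J : ℕ} {r : Fin J → ℝ} (hr : ∀ j, 0 < r j) (s : ℂ)
    (w : List (Fin J)) :
    (((w.map r).prod : ℝ) : ℂ) ^ s = (w.map fun i => ((r i : ℝ) : ℂ) ^ s).prod := by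
  induction w with
  | nil => simp
  | cons a t ih =>
    simp only [List.map_cons, List.prod_cons]
    rw [Complex.ofReal_mul, Complex.mul_cpow_ofReal_nonneg (hr a).le (map_prod_pos hr t).le, ih]

private lemma S_up {ℓ : ℕ → ℝ} (hpos : ∀ j, 0 < ℓ j) (hsum : Summable ℓ)
    {α β : ℝ} (hs : Summable fun j => ℓ j ^ α) (hab : α ≤ β) :
    Summable fun j => ℓ j ^ β := by
  have h0 : Tendsto ℓ atTop (nhds 0) := hsum.tendsto_atTop_zero
  obtain ⟨N, hN⟩ := (h0.eventually (eventually_le_nhds (by norm_num : (0:ℝ) < 1))).exists_forall_of_atTop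
  rw [← summable_nat_add_iff N] at hs ⊢
  refine hs.of_nonneg_of_le (fun j => Real.rpow_nonneg (hpos _).le _) fun j => ?_
  exact Real.rpow_le_rpow_of_exponent_ge (hpos _) (hN (j + N) (Nat.le_add_left _ _)) hab

/-- properties of the extended self-similar fractal string
`ℓ ⊗ L(r_1,…,r_J)`, indexed by pairs `(w, j)` of a finite word `w` in the alphabet `{1,…,J}`
and an index `j`, with lengths `(∏_{i∈w} r_i)·ℓ_j`: total length, geometric zeta function,
and abscissa of convergence. -/
theorem stmt14 (ℓ : ℕ → ℝ) (hpos : ∀ j, 0 < ℓ j) (hanti : Antitone ℓ) (hsum : Summable ℓ)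
    (J : ℕ) (hJ : 2 ≤ J) (r : Fin J → ℝ) (hr : ∀ j, r j ∈ Ioo (0 : ℝ) 1)
    (hrsum : ∑ j, r j < 1)
    (D : ℝ) (hD : D ∈ Ioo (0 : ℝ) 1) (hMoran : ∑ j, r j ^ D = 1) :
    Summable (fun p : List (Fin J) × ℕ => (p.1.map r).prod * ℓ p.2) ∧
    ∑' p : List (Fin J) × ℕ, (p.1.map r).prod * ℓ p.2 =
      (∑' j : ℕ, ℓ j) / (1 - ∑ j, r j) ∧
    (∀ s : ℂ, max (sInf {α : ℝ | 0 < α ∧ Summable fun j => ℓ j ^ α}) D < s.re →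
      Summable (fun p : List (Fin J) × ℕ => ‖(((p.1.map r).prod * ℓ p.2 : ℝ) : ℂ) ^ s‖) ∧
      ∑' p : List (Fin J) × ℕ, (((p.1.map r).prod * ℓ p.2 : ℝ) : ℂ) ^ s =
        (∑' j : ℕ, (ℓ j : ℂ) ^ s) / (1 - ∑ j, (r j : ℂ) ^ s)) ∧
    sInf {α : ℝ | 0 < α ∧ Summable fun p : List (Fin J) × ℕ => ((p.1.map r).prod * ℓ p.2) ^ α} =
      max (sInf {α : ℝ | 0 < α ∧ Summable fun j => ℓ j ^ α}) D := by
  have hrpos : ∀ j, 0 < r j := fun j => (hr j).1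
  have hrlt : ∀ j, r j < 1 := fun j => (hr j).2
  haveI : Nonempty (Fin J) := Fin.pos_iff_nonempty.mp (by omega)
  have haw : ∀ w : List (Fin J), 0 < (w.map r).prod := map_prod_pos hrpos
  set S : Set ℝ := {α : ℝ | 0 < α ∧ Summable fun j => ℓ j ^ α} with hSdef
  have hS1 : (1:ℝ) ∈ S := ⟨one_pos, by simpa [Real.rpow_one] using hsum⟩
  have hSne : S.Nonempty := ⟨1, hS1⟩
  have hSbdd : BddBelow S := ⟨0, fun α hα => hα.1.le⟩
  have hSmem : ∀ {t : ℝ}, sInf S < t → Summable fun j => ℓ j ^ t := by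
    intro t ht
    obtain ⟨β, hβ, hβt⟩ := exists_lt_of_csInf_lt hSne ht
    exact S_up hpos hsum hβ.2 hβt.le
  -- Moran characterization
  have hmlt : ∀ t : ℝ, D < t → ∑ j, r j ^ t < 1 := by
    intro t ht
    rw [← hMoran]
    exact Finset.sum_lt_sum_of_nonempty Finset.univ_nonempty fun j _ =>
      Real.rpow_lt_rpow_of_exponent_gt (hrpos j) (hrlt j) ht
  have hmge : ∀ t : ℝ, ∑ j, r j ^ t < 1 → D < t := by
    intro t ht
    by_contra h
    push_neg at h
    have : (1:ℝ) ≤ ∑ j, r j ^ t := by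
      rw [← hMoran]
      exact Finset.sum_le_sum fun j _ =>
        Real.rpow_le_rpow_of_exponent_ge (hrpos j) (hrlt j).le h
    linarith
  -- Part 1
  have h1 : ∑ j, ‖r j‖ < 1 := by
    rwa [Finset.sum_congr rfl fun j _ => (Real.norm_eq_abs (r j)).trans (abs_of_pos (hrpos j))]
  have wk := words_key r h1
  have hA : Summable fun w : List (Fin J) => (w.map r).prod :=
    (words_summable_iff r fun j => (hrpos j).le).mpr hrsum
  have hAnorm : Summable fun w : List (Fin J) => ‖(w.map r).prod‖ := wk.1
  have hℓnorm : Summable fun j => ‖ℓ j‖ :=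
    hsum.congr fun j => ((Real.norm_eq_abs (ℓ j)).trans (abs_of_pos (hpos j))).symm
  have part1 : Summable fun p : List (Fin J) × ℕ => (p.1.map r).prod * ℓ p.2 :=
    hA.mul_of_nonneg hsum (fun w => (haw w).le) fun j => (hpos j).le
  have part1t : ∑' p : List (Fin J) × ℕ, (p.1.map r).prod * ℓ p.2 =
      (∑' j : ℕ, ℓ j) / (1 - ∑ j, r j) := by
    rw [← tsum_mul_tsum_of_summable_norm hAnorm hℓnorm, wk.2, div_eq_mul_inv, mul_comm]
  refine ⟨part1, part1t, ?_, ?_⟩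
  · -- Part 2: complex zeta function
    intro s hs
    have hresD : D < s.re := lt_of_le_of_lt (le_max_right _ _) hs
    have hres0 : 0 < s.re := hD.1.trans hresD
    have hℓre : Summable fun j => ℓ j ^ s.re := hSmem (lt_of_le_of_lt (le_max_left _ _) hs)
    have hgnorm : Summable fun j => ‖((ℓ j : ℝ) : ℂ) ^ s‖ :=
      hℓre.congr fun j => by
        rw [Complex.norm_cpow_eq_rpow_re_of_pos (hpos j)]
    set fc : Fin J → ℂ := fun i => ((r i : ℝ) : ℂ) ^ s with hfc
    have hfcn : ∑ j, ‖fc j‖ < 1 := by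
      have : ∀ j, ‖fc j‖ = r j ^ s.re := fun j => by
        rw [hfc, Complex.norm_cpow_eq_rpow_re_of_pos (hrpos j)]
      rw [Finset.sum_congr rfl fun j _ => this j]
      exact hmlt _ hresD
    have wk2 := words_key fc hfcn
    have hsplit : ∀ (w : List (Fin J)) (j : ℕ),
        (((w.map r).prod * ℓ j : ℝ) : ℂ) ^ s = (w.map fc).prod * ((ℓ j : ℝ) : ℂ) ^ s := by
      intro w j
      rw [Complex.ofReal_mul, Complex.mul_cpow_ofReal_nonneg (haw w).le (hpos j).le,
        prod_map_cpow hrpos]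
    constructor
    · refine (wk2.1.mul_of_nonneg hgnorm (fun w => norm_nonneg _)
        (fun j => norm_nonneg _)).congr fun p => ?_
      rw [hsplit p.1 p.2, norm_mul]
    · calc ∑' p : List (Fin J) × ℕ, (((p.1.map r).prod * ℓ p.2 : ℝ) : ℂ) ^ s
          = ∑' p : List (Fin J) × ℕ, (p.1.map fc).prod * ((ℓ p.2 : ℝ) : ℂ) ^ s :=
            tsum_congr fun p => hsplit p.1 p.2
        _ = (∑' w : List (Fin J), (w.map fc).prod) * ∑' j : ℕ, ((ℓ j : ℝ) : ℂ) ^ s :=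
            (tsum_mul_tsum_of_summable_norm wk2.1 hgnorm).symm
        _ = (∑' j : ℕ, (ℓ j : ℂ) ^ s) / (1 - ∑ j, (r j : ℂ) ^ s) := by
            rw [wk2.2, div_eq_mul_inv, mul_comm]
  · -- Part 4: abscissa of convergence
    have hTiff : ∀ α : ℝ,
        (0 < α ∧ Summable fun p : List (Fin J) × ℕ => ((p.1.map r).prod * ℓ p.2) ^ α) ↔
        (0 < α ∧ D < α ∧ Summable fun j => ℓ j ^ α) := by
      intro α
      constructor
      · rintro ⟨hα, hfull⟩
        have hrw : ∀ p : List (Fin J) × ℕ, ((p.1.map r).prod * ℓ p.2) ^ α =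
            (p.1.map fun i => r i ^ α).prod * ℓ p.2 ^ α := fun p => by
          rw [Real.mul_rpow (haw p.1).le (hpos p.2).le, prod_map_rpow hrpos]
        have hfull' : Summable fun p : List (Fin J) × ℕ =>
            (p.1.map fun i => r i ^ α).prod * ℓ p.2 ^ α := hfull.congr hrw
        have hB : Summable fun j => ℓ j ^ α := by
          have hinj : Function.Injective fun j : ℕ => (([] : List (Fin J)), j) :=
            fun a b h => by simpa using h
          refine (hfull'.comp_injective hinj).congr fun j => ?_
          simp [Function.comp]
        have hA2 : Summable fun w : List (Fin J) => (w.map fun i => r i ^ α).prod := by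
          have hinj : Function.Injective fun w : List (Fin J) => (w, (0 : ℕ)) :=
            fun a b h => by simpa using h
          have h2 : Summable fun w : List (Fin J) => (w.map fun i => r i ^ α).prod * ℓ 0 ^ α :=
            (hfull'.comp_injective hinj).congr fun w => by simp [Function.comp]
          exact (summable_mul_right_iff (ne_of_gt (Real.rpow_pos_of_pos (hpos 0) α))).mp h2
        have hrlt1 : ∑ j, r j ^ α < 1 :=
          (words_summable_iff _ fun j => (Real.rpow_pos_of_pos (hrpos j) α).le).mp hA2
        exact ⟨hα, hmge α hrlt1, hB⟩
      · rintro ⟨hα, hDα, hB⟩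
        have hA2 : Summable fun w : List (Fin J) => (w.map fun i => r i ^ α).prod :=
          (words_summable_iff _ fun j => (Real.rpow_pos_of_pos (hrpos j) α).le).mpr (hmlt α hDα)
        refine ⟨hα, (hA2.mul_of_nonneg hB
          (fun w => (map_prod_pos (fun j => Real.rpow_pos_of_pos (hrpos j) α) w).le)
          (fun j => (Real.rpow_pos_of_pos (hpos j) α).le)).congr fun p => ?_⟩
        rw [Real.mul_rpow (haw p.1).le (hpos p.2).le, prod_map_rpow hrpos]
    have hTset : {α : ℝ | 0 < α ∧
        Summable fun p : List (Fin J) × ℕ => ((p.1.map r).prod * ℓ p.2) ^ α} =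
        {α : ℝ | 0 < α ∧ D < α ∧ Summable fun j => ℓ j ^ α} := Set.ext hTiff
    rw [hTset]
    set M := max (sInf S) D with hM
    have hM0 : 0 < M := lt_of_lt_of_le hD.1 (le_max_right _ _)
    have hmemT : ∀ b : ℝ, M < b → b ∈ {α : ℝ | 0 < α ∧ D < α ∧ Summable fun j => ℓ j ^ α} := by
      intro b hb
      have hDb : D < b := lt_of_le_of_lt (le_max_right _ _) hb
      exact ⟨hM0.trans hb, hDb, hSmem (lt_of_le_of_lt (le_max_left _ _) hb)⟩
    have hTne : {α : ℝ | 0 < α ∧ D < α ∧ Summable fun j => ℓ j ^ α}.Nonempty :=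
      ⟨M + 1, hmemT _ (by linarith)⟩
    have hTbdd : BddBelow {α : ℝ | 0 < α ∧ D < α ∧ Summable fun j => ℓ j ^ α} :=
      ⟨0, fun α hα => hα.1.le⟩
    refine le_antisymm ?_ ?_
    · refine le_of_forall_gt_imp_ge_of_dense fun b hb => csInf_le hTbdd (hmemT b hb)
    · refine le_csInf hTne fun α hα => max_le (csInf_le hSbdd ⟨hα.1, hα.2.2⟩) hα.2.1.le
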